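/- Let C and D be nonempty closed convex subsets of a real Hilbert space H such that ⟨c, d⟩ = 0 for all c ∈ C and d ∈ D (i.e., C ⊥ D). Then C + D is closed and convex, P_C + P_D = P_{C+D}, and d²_{C+D} = d²_C + d²_D − ‖·‖². -/

import Mathlib

open RealInnerProductSpace Pointwise

variable {H : Type*} [NormedAddCommGroup H] [InnerProductSpace ℝ H] [CompleteSpace H]

/-- `P` is the metric projection (nearest-point map) onto `C`. -/
def IsProjOn (C : Set H) (P : H → H) : Prop :=
  ∀ x, P x ∈ C ∧ ∀ y ∈ C, ‖x - P x‖ ≤ ‖x - y‖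

lemma key_norm (x c d : H) (h : ⟪c, d⟫ = 0) :
    ‖x - (c + d)‖ ^ 2 = ‖x - c‖ ^ 2 + ‖x - d‖ ^ 2 - ‖x‖ ^ 2 := by
  have hdc : ⟪d, c⟫ = 0 := by rw [real_inner_comm]; exact h
  simp only [← real_inner_self_eq_norm_sq, inner_sub_left, inner_sub_right,
    inner_add_left, inner_add_right, h, hdc]
  ring

lemma infDist_eq_of_proj {s : Set H} {x p : H} (hp : p ∈ s)
    (hmin : ∀ y ∈ s, ‖x - p‖ ≤ ‖x - y‖) : Metric.infDist x s = ‖x - p‖ := by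
  refine le_antisymm (by simpa [dist_eq_norm] using Metric.infDist_le_dist_of_mem hp) ?_
  by_contra hlt
  push_neg at hlt
  obtain ⟨y, hy, hylt⟩ := (Metric.infDist_lt_iff ⟨p, hp⟩).1 hlt
  exact absurd (hmin y hy) (by rw [dist_eq_norm] at hylt; linarith)


lemma sum_closed {C D : Set H} (hCcl : IsClosed C) (hDcl : IsClosed D)
    (hperp : ∀ c ∈ C, ∀ d ∈ D, ⟪c, d⟫ = 0) : IsClosed (C + D) := by
  haveI : Submodule.HasOrthogonalProjection ((Submodule.span ℝ D)ᗮ) :=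
    Submodule.HasOrthogonalProjection.ofCompleteSpace _
  have hCV : ∀ c ∈ C, c ∈ (Submodule.span ℝ D)ᗮ := by
    intro c hc
    rw [Submodule.mem_orthogonal']
    intro u hu
    induction hu using Submodule.span_induction with
    | mem d hd => exact hperp c hc d hd
    | zero => simp
    | add u v _ _ hu hv => rw [inner_add_right, hu, hv]; ring
    | smul a u _ hu => rw [real_inner_smul_right, hu]; ring
  have hDV : ∀ d ∈ D, d ∈ (Submodule.span ℝ D)ᗮᗮ := fun d hd =>
    (Submodule.le_orthogonal_orthogonal _) (Submodule.subset_span hd)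
  apply IsSeqClosed.isClosed
  intro z p hz hzp
  have hcd : ∀ n, ∃ c ∈ C, ∃ d ∈ D, c + d = z n := fun n => hz n
  choose c hc d hd hcd using hcd
  have hproj : ∀ n, (Submodule.orthogonalProjectionOnto ((Submodule.span ℝ D)ᗮ) (z n) : H) = c n := by
    intro n
    rw [← hcd n]
    have h1 : Submodule.orthogonalProjectionOnto ((Submodule.span ℝ D)ᗮ) (c n) = ⟨c n, hCV _ (hc n)⟩ :=
      Submodule.orthogonalProjectionOnto_mem_subspace_eq_self (K := ((Submodule.span ℝ D)ᗮ)) ⟨c n, hCV _ (hc n)⟩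
    have h2 : Submodule.orthogonalProjectionOnto ((Submodule.span ℝ D)ᗮ) (d n) = 0 :=
      Submodule.orthogonalProjectionOnto_apply_of_mem_orthogonal (hDV _ (hd n))
    rw [map_add, h1, h2]
    simp
  have hctend : Filter.Tendsto c Filter.atTop
      (nhds (Submodule.orthogonalProjectionOnto ((Submodule.span ℝ D)ᗮ) p : H)) :=
    (((((Submodule.span ℝ D)ᗮ).subtypeL.comp
      (Submodule.orthogonalProjectionOnto ((Submodule.span ℝ D)ᗮ))).continuous.tendsto p).comp hzp).congr hproj
  have hdtend : Filter.Tendsto d Filter.atTop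
      (nhds (p - (Submodule.orthogonalProjectionOnto ((Submodule.span ℝ D)ᗮ) p : H))) := by
    have heq : d = fun n => z n - c n :=
      funext fun n => by rw [← hcd n]; abel
    rw [heq]
    exact hzp.sub hctend
  have hcp : (Submodule.orthogonalProjectionOnto ((Submodule.span ℝ D)ᗮ) p : H) ∈ C :=
    hCcl.mem_of_tendsto hctend (Filter.Eventually.of_forall hc)
  have hdp : p - (Submodule.orthogonalProjectionOnto ((Submodule.span ℝ D)ᗮ) p : H) ∈ D :=
    hDcl.mem_of_tendsto hdtend (Filter.Eventually.of_forall hd)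
  exact ⟨_, hcp, _, hdp, by module⟩

theorem stmt8 (C D : Set H)
    (hCne : C.Nonempty) (hCcl : IsClosed C) (hCcv : Convex ℝ C)
    (hDne : D.Nonempty) (hDcl : IsClosed D) (hDcv : Convex ℝ D)
    (hperp : ∀ c ∈ C, ∀ d ∈ D, ⟪c, d⟫ = 0)
    (Pc Pd : H → H) (hPc : IsProjOn C Pc) (hPd : IsProjOn D Pd) :
    IsClosed (C + D) ∧ Convex ℝ (C + D) ∧ IsProjOn (C + D) (fun x => Pc x + Pd x) ∧
      ∀ x : H, Metric.infDist x (C + D) ^ 2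
        = Metric.infDist x C ^ 2 + Metric.infDist x D ^ 2 - ‖x‖ ^ 2 := by
  have hclosed : IsClosed (C + D) := sum_closed hCcl hDcl hperp
  -- projection
  have hproj : IsProjOn (C + D) (fun x => Pc x + Pd x) := by
    intro x
    obtain ⟨hPcx, hPcmin⟩ := hPc x
    obtain ⟨hPdx, hPdmin⟩ := hPd x
    refine ⟨Set.add_mem_add hPcx hPdx, ?_⟩
    rintro y ⟨c, hc, d, hd, rfl⟩
    have h1 := key_norm x (Pc x) (Pd x) (hperp _ hPcx _ hPdx)
    have h2 := key_norm x c d (hperp _ hc _ hd)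
    have hsq : ‖x - (Pc x + Pd x)‖ ^ 2 ≤ ‖x - (c + d)‖ ^ 2 := by
      rw [h1, h2]
      have ha := hPcmin c hc
      have hb := hPdmin d hd
      have ha' : ‖x - Pc x‖ ^ 2 ≤ ‖x - c‖ ^ 2 :=
        pow_le_pow_left₀ (norm_nonneg _) ha 2
      have hb' : ‖x - Pd x‖ ^ 2 ≤ ‖x - d‖ ^ 2 :=
        pow_le_pow_left₀ (norm_nonneg _) hb 2
      linarith
    exact (pow_le_pow_iff_left₀ (norm_nonneg _) (norm_nonneg _) two_ne_zero).1 hsq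
  refine ⟨hclosed, hCcv.add hDcv, hproj, ?_⟩
  intro x
  obtain ⟨hPcx, hPcmin⟩ := hPc x
  obtain ⟨hPdx, hPdmin⟩ := hPd x
  obtain ⟨hmem, hmin⟩ := hproj x
  rw [infDist_eq_of_proj hmem hmin, infDist_eq_of_proj hPcx hPcmin,
    infDist_eq_of_proj hPdx hPdmin]
  exact key_norm x (Pc x) (Pd x) (hperp _ hPcx _ hPdx)
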